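/- Let (Ĉ_m)_{m≥1} be iid strictly positive integrable random variables with mean C > 0, and let X_M = Ĉ_M · S_M where S_M is bounded and (Ĉ_M, S_M) has the same law for all M with E[Ĉ_M S_M] = C·μ. Then the estimator ∇̂⁽ᶜ⁾_M = X_M / ( (1/M) ∑_{m=1}^M Ĉ_m ), where X_M is independent of (Ĉ_1, …, Ĉ_{M-1}), converges in distribution to X₁/C as M → ∞, and E[X₁/C] = μ; hence ∇̂⁽ᶜ⁾ is asymptotically unbiased but its variance does not tend to 0 (so it is not consistent unless X₁/C is a.s. constant). -/

import Mathlib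

open MeasureTheory ProbabilityTheory Filter Topology

private lemma smcwake_clamp_mono (u v : ℝ) (h : u ≤ v) :
    max 0 (min 1 u) ≤ max 0 (min 1 v) ∧ max 0 (min 1 v) - max 0 (min 1 u) ≤ v - u := by
  constructor <;> simp only [max_def, min_def] <;> split_ifs <;> linarith

lemma smcwake_clamp_lip (u v : ℝ) : |max 0 (min 1 u) - max 0 (min 1 v)| ≤ |u - v| := by
  rcases le_total u v with h | h
  · obtain ⟨h1, h2⟩ := smcwake_clamp_mono u v h
    rw [abs_of_nonpos (by linarith), abs_of_nonpos (by linarith)]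
    linarith
  · obtain ⟨h1, h2⟩ := smcwake_clamp_mono v u h
    rw [abs_of_nonneg (by linarith), abs_of_nonneg (by linarith)]
    linarith

lemma smcwake_ae_const {Ω : Type*} [MeasureSpace Ω] [IsProbabilityMeasure (ℙ : Measure Ω)]
    (W : Ω → ℝ)
    (h : ∀ a b : ℝ, a < b → ℙ {ω | W ω ≤ a} = 0 ∨ ℙ {ω | b ≤ W ω} = 0) :
    ∃ c : ℝ, ∀ᵐ ω ∂ℙ, W ω = c := by
  have h2 : ∃ a : ℝ, ℙ {ω | W ω ≤ a} = 0 := by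
    by_contra hc
    push_neg at hc
    have hb : ∀ b : ℝ, ℙ {ω | b ≤ W ω} = 0 := fun b => by
      rcases h (b - 1) b (by linarith) with h' | h'
      · exact absurd h' (hc _)
      · exact h'
    have h0 : ℙ (⋃ n : ℕ, {ω | -(n:ℝ) ≤ W ω}) = 0 :=
      measure_iUnion_null fun n => hb _
    have huniv : (⋃ n : ℕ, {ω | -(n:ℝ) ≤ W ω}) = Set.univ := by
      ext ω; simp only [Set.mem_iUnion, Set.mem_setOf_eq, Set.mem_univ, iff_true]
      obtain ⟨n, hn⟩ := exists_nat_ge (-(W ω))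
      exact ⟨n, by linarith⟩
    rw [huniv] at h0
    simp [measure_univ] at h0
  have h1 : ∃ t : ℝ, ℙ {ω | W ω ≤ t} ≠ 0 := by
    by_contra hc
    push_neg at hc
    have h0 : ℙ (⋃ n : ℕ, {ω | W ω ≤ (n:ℝ)}) = 0 :=
      measure_iUnion_null fun n => hc _
    have huniv : (⋃ n : ℕ, {ω | W ω ≤ (n:ℝ)}) = Set.univ := by
      ext ω; simp only [Set.mem_iUnion, Set.mem_setOf_eq, Set.mem_univ, iff_true]
      exact exists_nat_ge (W ω)
    rw [huniv] at h0
    simp [measure_univ] at h0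
  obtain ⟨a0, ha0⟩ := h2
  set T : Set ℝ := {t | ℙ {ω | W ω ≤ t} ≠ 0} with hT
  have hTne : T.Nonempty := h1
  have hTbdd : BddBelow T := by
    refine ⟨a0, fun t ht => ?_⟩
    by_contra hlt
    push_neg at hlt
    exact ht (measure_mono_null (fun ω (hω : W ω ≤ t) => le_trans hω hlt.le) ha0)
  set c := sInf T with hc
  refine ⟨c, ?_⟩
  have hlow : ℙ {ω | W ω < c} = 0 := by
    have hsub : {ω | W ω < c} ⊆ ⋃ n : ℕ, {ω | W ω ≤ c - 1/(n+1)} := by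
      intro ω hω
      simp only [Set.mem_setOf_eq] at hω
      obtain ⟨n, hn⟩ := exists_nat_one_div_lt (show (0:ℝ) < c - W ω by linarith)
      exact Set.mem_iUnion.2 ⟨n, by simp only [Set.mem_setOf_eq]; push_cast at hn ⊢; linarith⟩
    refine measure_mono_null hsub (measure_iUnion_null fun n => ?_)
    by_contra hne
    have hle : c ≤ c - 1/(n+1) := csInf_le hTbdd hne
    have hpos : (0:ℝ) < 1/((n:ℝ)+1) := by positivity
    push_cast at hle
    linarith
  have hhigh : ℙ {ω | c < W ω} = 0 := by
    have hsub : {ω | c < W ω} ⊆ ⋃ n : ℕ, {ω | c + 1/(n+1) ≤ W ω} := by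
      intro ω hω
      simp only [Set.mem_setOf_eq] at hω
      obtain ⟨n, hn⟩ := exists_nat_one_div_lt (show (0:ℝ) < W ω - c by linarith)
      exact Set.mem_iUnion.2 ⟨n, by simp only [Set.mem_setOf_eq]; push_cast at hn ⊢; linarith⟩
    refine measure_mono_null hsub (measure_iUnion_null fun n => ?_)
    have hpos : (0:ℝ) < 1/(2*((n:ℝ)+1)) := by positivity
    have hmid : c < c + 1/(2*((n:ℝ)+1)) := by linarith
    obtain ⟨t, htT, htlt⟩ := (csInf_lt_iff hTbdd hTne).1 hmid
    have hmono : ℙ {ω | W ω ≤ t} ≤ ℙ {ω | W ω ≤ c + 1/(2*((n:ℝ)+1))} :=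
      measure_mono fun ω hω => le_trans hω htlt.le
    have hne : ℙ {ω | W ω ≤ c + 1/(2*((n:ℝ)+1))} ≠ 0 :=
      fun h0 => htT (le_antisymm (h0 ▸ hmono) zero_le)
    have hlt : c + 1/(2*((n:ℝ)+1)) < c + 1/((n:ℝ)+1) := by
      have h1 : (1:ℝ)/(2*((n:ℝ)+1)) < 1/((n:ℝ)+1) := by
        rw [div_lt_div_iff₀ (by positivity) (by positivity)]
        nlinarith [(show (0:ℝ) < (n:ℝ)+1 by positivity)]
      linarith
    rcases h _ _ hlt with h' | h'
    · exact absurd h' hne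
    · exact h'
  have hne : ℙ {ω | W ω ≠ c} = 0 := by
    refine measure_mono_null (fun ω hω => ?_) (measure_union_null hlow hhigh)
    rcases lt_or_gt_of_ne (hω : W ω ≠ c) with h' | h'
    · exact Or.inl h'
    · exact Or.inr h'
  exact ae_iff.2 hne

set_option maxHeartbeats 1000000 in
theorem stmt3 {Ω : Type*} [MeasureSpace Ω] [IsProbabilityMeasure (ℙ : Measure Ω)]
    (Chat S : ℕ → Ω → ℝ)
    (hChat_indep : iIndepFun Chat ℙ)
    (hChat_ident : ∀ m, IdentDistrib (Chat m) (Chat 1) ℙ ℙ)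
    (hChat_pos : ∀ m, ∀ᵐ ω ∂ℙ, 0 < Chat m ω)
    (hChat_int : ∀ m, Integrable (Chat m) ℙ)
    (C μ : ℝ) (hC : 0 < C) (hEC : ∫ ω, Chat 1 ω ∂ℙ = C)
    (B : ℝ) (hS_bdd : ∀ m ω, |S m ω| ≤ B)
    (hpair_ident : ∀ m, 1 ≤ m → IdentDistrib (fun ω => (Chat m ω, S m ω))
      (fun ω => (Chat 1 ω, S 1 ω)) ℙ ℙ)
    (hmean : ∫ ω, Chat 1 ω * S 1 ω ∂ℙ = C * μ)
    (hX_indep : ∀ M : ℕ, IndepFun (fun ω => Chat M ω * S M ω)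
      (fun ω => fun i : Fin (M - 1) => Chat (i.1 + 1) ω) ℙ) :
    (∀ g : BoundedContinuousFunction ℝ ℝ,
      Tendsto (fun M : ℕ => ∫ ω, g ((Chat M ω * S M ω) /
          ((∑ m ∈ Finset.Icc 1 M, Chat m ω) / M)) ∂ℙ)
        atTop (nhds (∫ ω, g (Chat 1 ω * S 1 ω / C) ∂ℙ))) ∧
    (∫ ω, Chat 1 ω * S 1 ω / C ∂ℙ = μ) ∧
    ((¬ ∃ c : ℝ, ∀ᵐ ω ∂ℙ, Chat 1 ω * S 1 ω / C = c) →
      ¬ Tendsto (fun M : ℕ => variance (fun ω => (Chat M ω * S M ω) /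
          ((∑ m ∈ Finset.Icc 1 M, Chat m ω) / M)) ℙ) atTop (nhds 0)) := by
  classical
  obtain ⟨ω₀, -⟩ := (hChat_pos 1).exists
  have hB0 : 0 ≤ B := le_trans (abs_nonneg _) (hS_bdd 1 ω₀)
  -- abbreviations
  set D : ℕ → Ω → ℝ := fun M ω => (∑ m ∈ Finset.Icc 1 M, Chat m ω) / M with hD
  set Z : Ω → ℝ := fun ω => Chat 1 ω * S 1 ω / C with hZdef
  -- measurability
  have hCm : ∀ m, AEMeasurable (Chat m) ℙ := fun m => (hChat_int m).aemeasurable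
  have hSm : ∀ m, 1 ≤ m → AEMeasurable (S m) ℙ := fun m hm =>
    measurable_snd.comp_aemeasurable (hpair_ident m hm).aemeasurable_fst
  have hXm : ∀ m, 1 ≤ m → AEMeasurable (fun ω => Chat m ω * S m ω) ℙ := fun m hm =>
    (hCm m).mul (hSm m hm)
  have hDm : ∀ M, AEMeasurable (D M) ℙ := fun M =>
    (Finset.aemeasurable_fun_sum _ fun i _ => hCm i).div_const _
  have hrm : ∀ M, 1 ≤ M → AEMeasurable (fun ω => Chat M ω * S M ω / D M ω) ℙ :=
    fun M hM => (hXm M hM).div (hDm M)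
  have hZm : AEMeasurable Z ℙ := (hXm 1 le_rfl).div_const _
  have hpos_all : ∀ᵐ ω ∂ℙ, ∀ m, 0 < Chat m ω := ae_all_iff.2 hChat_pos
  -- strong law of large numbers
  have hSLLN : ∀ᵐ ω ∂ℙ, Tendsto (fun M : ℕ => D M ω) atTop (𝓝 C) := by
    have h := strong_law_ae_real (μ := ℙ) (fun i => Chat (1 + i))
      (by simpa using hChat_int 1)
      (fun i j hij => hChat_indep.indepFun (by omega))
      (fun i => (hChat_ident (1 + i)).trans (hChat_ident 1).symm)
    have hint1 : (ℙ : Measure Ω)[fun ω => Chat (1 + 0) ω] = C := by simpa using hEC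
    filter_upwards [h] with ω hω
    have hrw : ∀ M : ℕ, D M ω = (∑ i ∈ Finset.range M, Chat (1 + i) ω) / M := by
      intro M
      simp only [hD]
      congr 1
      rw [← Finset.Ico_add_one_right_eq_Icc, Finset.sum_Ico_eq_sum_range]
      simp
    simp only [hrw]
    rw [← hint1]
    exact hω
  -- convergence in probability of the denominator
  have hmeasB : ∀ δ : ℝ, 0 < δ →
      Tendsto (fun M : ℕ => (ℙ {ω | δ ≤ |D M ω - C|}).toReal) atTop (𝓝 0) := by
    intro δ hδ
    have h := tendstoInMeasure_of_tendsto_ae (μ := ℙ) (g := fun _ => C)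
      (fun M => (hDm M).aestronglyMeasurable) hSLLN (ENNReal.ofReal δ) (ENNReal.ofReal_pos.2 hδ)
    have h2 : Tendsto (fun M : ℕ => (ℙ {ω | δ ≤ dist (D M ω) C}).toReal) atTop (𝓝 0) := by
      have hset : ∀ M : ℕ, {ω | ENNReal.ofReal δ ≤ edist (D M ω) C} = {ω | δ ≤ dist (D M ω) C} :=
        fun M => by
          ext ω; simp only [Set.mem_setOf_eq, edist_dist]; exact ENNReal.ofReal_le_ofReal_iff dist_nonneg
      have := (ENNReal.tendsto_toReal (by simp)).comp h
      simpa [hset, Function.comp_def] using this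
    simpa [Real.dist_eq] using h2
  -- Markov bound
  have hMarkov : ∀ K : ℝ, 0 < K → ∀ m : ℕ, (ℙ {ω | K ≤ Chat m ω}).toReal ≤ C / K := by
    intro K hK m
    have h1 : ℙ {ω | K ≤ Chat m ω} = ℙ {ω | K ≤ Chat 1 ω} := by
      have h := (hChat_ident m).measure_mem_eq (measurableSet_Ici (a := K))
      simpa [Set.preimage, Set.mem_Ici] using h
    have h2 := mul_meas_ge_le_integral_of_nonneg (μ := ℙ) (f := Chat 1)
      ((hChat_pos 1).mono fun ω h => h.le) (hChat_int 1) K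
    rw [hEC] at h2
    rw [h1, le_div_iff₀ hK, mul_comm]
    exact h2
  -- Part 1
  have hpart1 : ∀ g : BoundedContinuousFunction ℝ ℝ,
      Tendsto (fun M : ℕ => ∫ ω, g ((Chat M ω * S M ω) / D M ω) ∂ℙ)
        atTop (𝓝 (∫ ω, g (Z ω) ∂ℙ)) := by
    intro g
    set G := ‖g‖ with hG
    have hG0 : 0 ≤ G := norm_nonneg g
    have hgb : ∀ x : ℝ, |g x| ≤ G := fun x => by
      simpa [Real.norm_eq_abs] using g.norm_coe_le_norm x
    rw [Metric.tendsto_atTop]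
    intro ε hε
    obtain ⟨K, hKpos, hKb⟩ : ∃ K : ℝ, 0 < K ∧ 2 * G * (C / K) ≤ ε / 4 := by
      refine ⟨8 * (G + 1) * C / ε + 1, by positivity, ?_⟩
      have hKpos : (0:ℝ) < 8 * (G + 1) * C / ε + 1 := by positivity
      have h2 : ε * (8 * (G + 1) * C / ε + 1) = 8 * (G + 1) * C + ε := by
        field_simp
      have h1 : C / (8 * (G + 1) * C / ε + 1) ≤ ε / (8 * (G + 1)) := by
        rw [div_le_div_iff₀ hKpos (by positivity)]
        nlinarith
      have h4 : 2 * G * (ε / (8 * (G + 1))) ≤ ε / 4 := by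
        have h5 : 2 * G * (ε / (8 * (G + 1))) = 2 * G * ε / (8 * (G + 1)) := by ring
        rw [h5, div_le_div_iff₀ (by positivity) (by positivity)]
        nlinarith
      have h6 := mul_le_mul_of_nonneg_left h1 (by positivity : (0:ℝ) ≤ 2*G)
      linarith
    obtain ⟨R, hRpos, hR2⟩ : ∃ R : ℝ, 0 < R ∧ 2 * K * B / C + 1 ≤ R :=
      ⟨2 * K * B / C + 1, by positivity, le_rfl⟩
    obtain ⟨δ₀, hδ₀, hUC⟩ := (Metric.uniformContinuousOn_iff.1
      ((isCompact_Icc (a := -R) (b := R)).uniformContinuousOn_of_continuous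
        g.continuous.continuousOn)) (ε/4) (by positivity)
    obtain ⟨δ, hδpos, hδC, hδ2⟩ :
        ∃ δ : ℝ, 0 < δ ∧ δ ≤ C/2 ∧ δ * (2*(2*K*B+1)) ≤ δ₀ * C^2 := by
      refine ⟨min (C/2) (δ₀ * C^2 / (2*(2*K*B+1))), lt_min (by positivity) (by positivity),
        min_le_left _ _, ?_⟩
      have hm := min_le_right (C/2) (δ₀ * C^2 / (2*(2*K*B+1)))
      calc min (C/2) (δ₀ * C^2 / (2*(2*K*B+1))) * (2*(2*K*B+1))
          ≤ (δ₀ * C^2 / (2*(2*K*B+1))) * (2*(2*K*B+1)) :=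
            mul_le_mul_of_nonneg_right hm (by positivity)
        _ = δ₀ * C^2 := div_mul_cancel₀ _ (by positivity)
    have hBev : ∀ᶠ M : ℕ in atTop, 2*G*(ℙ {ω | δ ≤ |D M ω - C|}).toReal < ε/4 := by
      have h := (hmeasB δ hδpos).const_mul (2*G)
      rw [mul_zero] at h
      exact h.eventually (eventually_lt_nhds (by positivity))
    obtain ⟨N, hN⟩ := eventually_atTop.1 (hBev.and (eventually_ge_atTop 1))
    refine ⟨N, fun M hM => ?_⟩
    obtain ⟨hBM, hM1⟩ := hN M hM
    have hid : ∫ ω, g (Chat M ω * S M ω / C) ∂ℙ = ∫ ω, g (Z ω) ∂ℙ := by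
      have h := ((hpair_ident M hM1).comp
        (u := fun p : ℝ × ℝ => g (p.1 * p.2 / C))
        (g.continuous.measurable.comp ((measurable_fst.mul measurable_snd).div_const C)))
      simpa [Function.comp] using h.integral_eq
    have hgr_int : Integrable (fun ω => g (Chat M ω * S M ω / D M ω)) ℙ := by
      refine Integrable.mono' (integrable_const G)
        (g.continuous.measurable.comp_aemeasurable (hrm M hM1)).aestronglyMeasurable
        (Eventually.of_forall fun ω => ?_)
      simpa [Real.norm_eq_abs] using hgb _
    have hgc_int : Integrable (fun ω => g (Chat M ω * S M ω / C)) ℙ := by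
      refine Integrable.mono' (integrable_const G)
        (g.continuous.measurable.comp_aemeasurable ((hXm M hM1).div_const C)).aestronglyMeasurable
        (Eventually.of_forall fun ω => ?_)
      simpa [Real.norm_eq_abs] using hgb _
    set A : Set Ω := toMeasurable ℙ {ω | K ≤ Chat M ω} with hA
    set Bs : Set Ω := toMeasurable ℙ {ω | δ ≤ |D M ω - C|} with hBs
    have hAmeas : MeasurableSet A := measurableSet_toMeasurable ℙ _
    have hBmeas : MeasurableSet Bs := measurableSet_toMeasurable ℙ _
    have hindA : ∀ ω, 0 ≤ A.indicator (fun _ => (1:ℝ)) ω :=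
      fun ω => Set.indicator_nonneg (fun _ _ => zero_le_one) ω
    have hindB : ∀ ω, 0 ≤ Bs.indicator (fun _ => (1:ℝ)) ω :=
      fun ω => Set.indicator_nonneg (fun _ _ => zero_le_one) ω
    have hiA : Integrable (fun ω => (2*G) * A.indicator (fun _ => (1:ℝ)) ω) ℙ :=
      ((integrable_const (1:ℝ)).indicator hAmeas).const_mul _
    have hiB : Integrable (fun ω => (2*G) * Bs.indicator (fun _ => (1:ℝ)) ω) ℙ :=
      ((integrable_const (1:ℝ)).indicator hBmeas).const_mul _
    have hbound_int : Integrable (fun ω => ε/4 + (2*G) * A.indicator (fun _ => (1:ℝ)) ω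
        + (2*G) * Bs.indicator (fun _ => (1:ℝ)) ω) ℙ :=
      ((integrable_const _).add hiA).add hiB
    have hae : ∀ᵐ ω ∂ℙ, |g (Chat M ω * S M ω / D M ω) - g (Chat M ω * S M ω / C)|
        ≤ ε/4 + (2*G) * A.indicator (fun _ => (1:ℝ)) ω
          + (2*G) * Bs.indicator (fun _ => (1:ℝ)) ω := by
      filter_upwards [hChat_pos M] with ω hposM
      have habs : |g (Chat M ω * S M ω / D M ω) - g (Chat M ω * S M ω / C)| ≤ 2*G := by
        have h1 := hgb (Chat M ω * S M ω / D M ω)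
        have h2 := hgb (Chat M ω * S M ω / C)
        have h3 := abs_sub (g (Chat M ω * S M ω / D M ω)) (g (Chat M ω * S M ω / C))
        linarith
      by_cases hAm : ω ∈ A
      · rw [Set.indicator_of_mem hAm]
        have h2 := hindB ω
        nlinarith
      by_cases hBm : ω ∈ Bs
      · rw [Set.indicator_of_mem hBm, Set.indicator_of_notMem hAm]
        nlinarith
      · rw [Set.indicator_of_notMem hAm, Set.indicator_of_notMem hBm]
        have hAm' : Chat M ω < K := by
          by_contra h
          exact hAm (subset_toMeasurable _ _ (le_of_not_gt h))
        have hBm' : |D M ω - C| < δ := by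
          by_contra h
          exact hBm (subset_toMeasurable _ _ (le_of_not_gt h))
        have hd1 : C/2 ≤ D M ω := by
          have h := abs_lt.1 hBm'
          linarith [h.1]
        have hd0 : 0 < D M ω := lt_of_lt_of_le (by linarith) hd1
        have hxb : |Chat M ω * S M ω| ≤ K * B := by
          rw [abs_mul]
          exact mul_le_mul (by rw [abs_of_pos hposM]; exact hAm'.le) (hS_bdd M ω)
            (abs_nonneg _) hKpos.le
        have hxd : Chat M ω * S M ω / D M ω ∈ Set.Icc (-R) R := by
          have h1 : |Chat M ω * S M ω / D M ω| ≤ K*B/(C/2) := by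
            rw [abs_div, abs_of_pos hd0]
            exact div_le_div₀ (by positivity) hxb (by positivity) hd1
          have h2 : K*B/(C/2) = 2*K*B/C := by
            field_simp
          rw [h2] at h1
          exact Set.mem_Icc.2 (abs_le.1 (h1.trans (le_trans (by linarith) hR2)))
        have hxC : Chat M ω * S M ω / C ∈ Set.Icc (-R) R := by
          have h1 : |Chat M ω * S M ω / C| ≤ K*B/C := by
            rw [abs_div, abs_of_pos hC]
            exact div_le_div₀ (by positivity) hxb hC le_rfl
          have h2 : K*B/C ≤ R := by
            have h3 : K*B/C ≤ 2*K*B/C :=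
              div_le_div₀ (by positivity) (by nlinarith) hC le_rfl
            linarith
          exact Set.mem_Icc.2 (abs_le.1 (h1.trans h2))
        have hdist : dist (Chat M ω * S M ω / D M ω) (Chat M ω * S M ω / C) < δ₀ := by
          rw [Real.dist_eq]
          have h1 : Chat M ω * S M ω / D M ω - Chat M ω * S M ω / C
              = (Chat M ω * S M ω) * (C - D M ω) / (D M ω * C) := by
            field_simp
          rw [h1, abs_div, abs_mul, abs_of_pos (by positivity : 0 < D M ω * C)]
          have h2 : |Chat M ω * S M ω| * |C - D M ω| ≤ K*B*δ := by
            apply mul_le_mul hxb ?_ (abs_nonneg _) (by positivity)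
            rw [abs_sub_comm]
            exact hBm'.le
          have h3 : C/2 * C ≤ D M ω * C := by nlinarith
          calc |Chat M ω * S M ω| * |C - D M ω| / (D M ω * C)
              ≤ K*B*δ/(C/2*C) := div_le_div₀ (by positivity) h2 (by positivity) h3
            _ < δ₀ := by
                rw [div_lt_iff₀ (by positivity)]
                have h5 : (0:ℝ) ≤ δ₀ * C^2 := by positivity
                have h6 : (0:ℝ) ≤ K*B*δ := mul_nonneg (mul_nonneg hKpos.le hB0) hδpos.le
                have h7 : δ * (2*(2*K*B+1)) = 4*(K*B*δ) + 2*δ := by ring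
                have h8 : δ₀*(C/2*C) = (δ₀*C^2)/2 := by ring
                rw [h8]
                linarith [hδ2, h7 ▸ hδ2]
        have h4 := hUC _ hxd _ hxC hdist
        rw [Real.dist_eq] at h4
        linarith
    have hint_bound : ∫ ω, (ε/4 + (2*G) * A.indicator (fun _ => (1:ℝ)) ω
        + (2*G) * Bs.indicator (fun _ => (1:ℝ)) ω) ∂ℙ
        = ε/4 + 2*G*(ℙ {ω | K ≤ Chat M ω}).toReal
          + 2*G*(ℙ {ω | δ ≤ |D M ω - C|}).toReal := by
      have e1 : ∫ ω, (ε/4 + (2*G) * A.indicator (fun _ => (1:ℝ)) ω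
          + (2*G) * Bs.indicator (fun _ => (1:ℝ)) ω) ∂ℙ
          = (∫ ω, (ε/4 + (2*G) * A.indicator (fun _ => (1:ℝ)) ω) ∂ℙ)
            + ∫ ω, (2*G) * Bs.indicator (fun _ => (1:ℝ)) ω ∂ℙ :=
        integral_add ((integrable_const _).add hiA) hiB
      have e2 : ∫ ω, (ε/4 + (2*G) * A.indicator (fun _ => (1:ℝ)) ω) ∂ℙ
          = (∫ _ω, (ε/4 : ℝ) ∂ℙ) + ∫ ω, (2*G) * A.indicator (fun _ => (1:ℝ)) ω ∂ℙ :=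
        integral_add (integrable_const _) hiA
      have e3 : ∫ ω, (2*G) * A.indicator (fun _ => (1:ℝ)) ω ∂ℙ
          = 2*G*(ℙ {ω | K ≤ Chat M ω}).toReal := by
        rw [integral_const_mul, integral_indicator_const _ hAmeas]
        simp [hA, measure_toMeasurable, measureReal_def]
      have e4 : ∫ ω, (2*G) * Bs.indicator (fun _ => (1:ℝ)) ω ∂ℙ
          = 2*G*(ℙ {ω | δ ≤ |D M ω - C|}).toReal := by
        rw [integral_const_mul, integral_indicator_const _ hBmeas]
        simp [hBs, measure_toMeasurable, measureReal_def]
      rw [e1, e2, e3, e4, integral_const]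
      simp
    have hdiff : |(∫ ω, g (Chat M ω * S M ω / D M ω) ∂ℙ)
        - ∫ ω, g (Chat M ω * S M ω / C) ∂ℙ|
        ≤ ε/4 + 2*G*(ℙ {ω | K ≤ Chat M ω}).toReal
          + 2*G*(ℙ {ω | δ ≤ |D M ω - C|}).toReal := by
      rw [← integral_sub hgr_int hgc_int]
      calc |∫ ω, (g (Chat M ω * S M ω / D M ω) - g (Chat M ω * S M ω / C)) ∂ℙ|
          ≤ ∫ ω, |g (Chat M ω * S M ω / D M ω) - g (Chat M ω * S M ω / C)| ∂ℙ := by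
            simpa [Real.norm_eq_abs] using
              norm_integral_le_integral_norm
                (fun ω => g (Chat M ω * S M ω / D M ω) - g (Chat M ω * S M ω / C))
        _ ≤ ∫ ω, (ε/4 + (2*G) * A.indicator (fun _ => (1:ℝ)) ω
            + (2*G) * Bs.indicator (fun _ => (1:ℝ)) ω) ∂ℙ :=
            integral_mono_ae (hgr_int.sub hgc_int).abs hbound_int hae
        _ = _ := hint_bound
    have hAbound : 2*G*(ℙ {ω | K ≤ Chat M ω}).toReal ≤ ε/4 :=
      le_trans (mul_le_mul_of_nonneg_left (hMarkov K hKpos M) (by positivity)) hKb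
    rw [Real.dist_eq, ← hid]
    calc |(∫ ω, g (Chat M ω * S M ω / D M ω) ∂ℙ)
        - ∫ ω, g (Chat M ω * S M ω / C) ∂ℙ| ≤ _ := hdiff
      _ < ε := by linarith
  -- Part 2
  have hpart2 : ∫ ω, Z ω ∂ℙ = μ := by
    rw [hZdef]
    show (∫ ω, Chat 1 ω * S 1 ω / C ∂ℙ) = μ
    rw [integral_div, hmean, mul_div_cancel_left₀ μ hC.ne']
  refine ⟨hpart1, hpart2, ?_⟩
  intro hnc htend
  -- Z is not a.s. constant: find a < b with positive tail probabilities
  obtain ⟨a, b, hab, hpa, hpb⟩ :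
      ∃ a b : ℝ, a < b ∧ ℙ {ω | Z ω ≤ a} ≠ 0 ∧ ℙ {ω | b ≤ Z ω} ≠ 0 := by
    have h : ¬ ∀ a b : ℝ, a < b → ℙ {ω | Z ω ≤ a} = 0 ∨ ℙ {ω | b ≤ Z ω} = 0 :=
      fun h' => hnc (smcwake_ae_const Z h')
    push_neg at h
    obtain ⟨a, b, hab, h1, h2⟩ := h
    exact ⟨a, b, hab, h1, h2⟩
  set mid := (a+b)/2 with hmid
  have hamid : 0 < mid - a := by rw [hmid]; linarith
  have hmidb : 0 < b - mid := by rw [hmid]; linarith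
  -- measurable version of Z
  set Z' := hZm.mk Z with hZ'
  have hZ'meas : Measurable Z' := hZm.measurable_mk
  have hZae : Z =ᵐ[ℙ] Z' := hZm.ae_eq_mk
  have hpa' : ℙ {ω | Z' ω ≤ a} = ℙ {ω | Z ω ≤ a} :=
    (measure_congr (Filter.eventuallyEq_set.2 (by
      filter_upwards [hZae] with ω h
      simp [Set.mem_setOf_eq, h]))).symm
  have hpb' : ℙ {ω | b ≤ Z' ω} = ℙ {ω | b ≤ Z ω} :=
    (measure_congr (Filter.eventuallyEq_set.2 (by
      filter_upwards [hZae] with ω h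
      simp [Set.mem_setOf_eq, h]))).symm
  have hp1pos : 0 < (ℙ {ω | Z' ω ≤ a}).toReal :=
    ENNReal.toReal_pos (hpa' ▸ hpa) (measure_ne_top _ _)
  have hp2pos : 0 < (ℙ {ω | b ≤ Z' ω}).toReal :=
    ENNReal.toReal_pos (hpb' ▸ hpb) (measure_ne_top _ _)
  -- bump functions
  have hclamp_mem : ∀ u : ℝ, 0 ≤ max 0 (min 1 u) ∧ max 0 (min 1 u) ≤ 1 :=
    fun u => ⟨le_max_left _ _, max_le zero_le_one (min_le_left _ _)⟩
  have hmk : ∀ f : C(ℝ, ℝ), (∀ x, 0 ≤ f x ∧ f x ≤ 1) →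
      ∀ x y : ℝ, dist (f x) (f y) ≤ 1 := by
    intro f hf x y
    rw [Real.dist_eq, abs_sub_le_iff]
    exact ⟨by linarith [(hf x).1, (hf x).2, (hf y).1, (hf y).2],
      by linarith [(hf x).1, (hf x).2, (hf y).1, (hf y).2]⟩
  have hcont1 : Continuous fun x : ℝ => max 0 (min 1 ((mid - x)/(mid - a))) :=
    continuous_const.max (continuous_const.min
      ((continuous_const.sub continuous_id).div_const _))
  have hcont2 : Continuous fun x : ℝ => max 0 (min 1 ((x - mid)/(b - mid))) :=
    continuous_const.max (continuous_const.min
      ((continuous_id.sub continuous_const).div_const _))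
  set g₁ : BoundedContinuousFunction ℝ ℝ :=
    BoundedContinuousFunction.mkOfBound
      ⟨fun x => max 0 (min 1 ((mid - x)/(mid - a))), hcont1⟩ 1
      (hmk _ (fun x => hclamp_mem _)) with hg₁def
  set g₂ : BoundedContinuousFunction ℝ ℝ :=
    BoundedContinuousFunction.mkOfBound
      ⟨fun x => max 0 (min 1 ((x - mid)/(b - mid))), hcont2⟩ 1
      (hmk _ (fun x => hclamp_mem _)) with hg₂def
  have hg₁x : ∀ x, g₁ x = max 0 (min 1 ((mid - x)/(mid - a))) := fun x => rfl
  have hg₂x : ∀ x, g₂ x = max 0 (min 1 ((x - mid)/(b - mid))) := fun x => rfl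
  have hg₁_one : ∀ x : ℝ, x ≤ a → g₁ x = 1 := by
    intro x hx
    rw [hg₁x]
    have h1 : (1:ℝ) ≤ (mid - x)/(mid - a) := (le_div_iff₀ hamid).2 (by linarith)
    rw [min_eq_left h1, max_eq_right zero_le_one]
  have hg₂_one : ∀ x : ℝ, b ≤ x → g₂ x = 1 := by
    intro x hx
    rw [hg₂x]
    have h1 : (1:ℝ) ≤ (x - mid)/(b - mid) := (le_div_iff₀ hmidb).2 (by linarith)
    rw [min_eq_left h1, max_eq_right zero_le_one]
  have hg₁_pos : ∀ x : ℝ, 0 < g₁ x → x < mid := by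
    intro x hx
    by_contra h
    push_neg at h
    rw [hg₁x, max_eq_left (le_trans (min_le_right _ _)
      (div_nonpos_iff.2 (Or.inr ⟨by linarith, hamid.le⟩)))] at hx
    exact lt_irrefl _ hx
  have hg₂_pos : ∀ x : ℝ, 0 < g₂ x → mid < x := by
    intro x hx
    by_contra h
    push_neg at h
    rw [hg₂x, max_eq_left (le_trans (min_le_right _ _)
      (div_nonpos_iff.2 (Or.inr ⟨by linarith, hmidb.le⟩)))] at hx
    exact lt_irrefl _ hx
  have hg₁_lip : ∀ x y : ℝ, |g₁ x - g₁ y| ≤ (1/(mid-a)) * |x - y| := by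
    intro x y
    rw [hg₁x, hg₁x]
    refine le_trans (smcwake_clamp_lip _ _) ?_
    have h1 : (mid - x)/(mid - a) - (mid - y)/(mid - a) = (y - x)/(mid - a) := by
      field_simp
      ring
    rw [h1, abs_div, abs_of_pos hamid, abs_sub_comm y x]
    rw [div_eq_mul_inv, mul_comm]
    rw [one_div, mul_comm]
  have hg₂_lip : ∀ x y : ℝ, |g₂ x - g₂ y| ≤ (1/(b-mid)) * |x - y| := by
    intro x y
    rw [hg₂x, hg₂x]
    refine le_trans (smcwake_clamp_lip _ _) ?_
    have h1 : (x - mid)/(b - mid) - (y - mid)/(b - mid) = (x - y)/(b - mid) := by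
      field_simp
      ring
    rw [h1, abs_div, abs_of_pos hmidb]
    rw [one_div, mul_comm, div_eq_mul_inv]
  -- bounded continuous integrands over Z are integrable
  have hint_of_bcf : ∀ (gg : BoundedContinuousFunction ℝ ℝ) (f : Ω → ℝ),
      AEMeasurable f ℙ → Integrable (fun ω => gg (f ω)) ℙ := by
    intro gg f hf
    refine Integrable.mono' (integrable_const ‖gg‖)
      (gg.continuous.measurable.comp_aemeasurable hf).aestronglyMeasurable
      (Eventually.of_forall fun ω => gg.norm_coe_le_norm _)
  -- integral lower bounds
  have hq1 : (ℙ {ω | Z' ω ≤ a}).toReal ≤ ∫ ω, g₁ (Z ω) ∂ℙ := by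
    have hmset : MeasurableSet {ω | Z' ω ≤ a} := hZ'meas measurableSet_Iic
    have hind : Integrable ((fun ω => Set.indicator {ω | Z' ω ≤ a} (fun _ => (1:ℝ)) ω)) ℙ :=
      (integrable_const (1:ℝ)).indicator hmset
    have heq : ∫ ω, Set.indicator {ω | Z' ω ≤ a} (fun _ => (1:ℝ)) ω ∂ℙ
        = (ℙ {ω | Z' ω ≤ a}).toReal := by
      rw [integral_indicator_const _ hmset]
      simp [measureReal_def]
    rw [← heq]
    refine integral_mono_ae hind (hint_of_bcf g₁ Z hZm) ?_
    filter_upwards [hZae] with ω h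
    by_cases hω : ω ∈ {ω | Z' ω ≤ a}
    · rw [Set.indicator_of_mem hω]
      rw [hg₁_one (Z ω) (by rw [h]; exact hω)]
    · rw [Set.indicator_of_notMem hω]
      rw [hg₁x]
      exact (hclamp_mem _).1
  have hq2 : (ℙ {ω | b ≤ Z' ω}).toReal ≤ ∫ ω, g₂ (Z ω) ∂ℙ := by
    have hmset : MeasurableSet {ω | b ≤ Z' ω} := hZ'meas measurableSet_Ici
    have hind : Integrable ((fun ω => Set.indicator {ω | b ≤ Z' ω} (fun _ => (1:ℝ)) ω)) ℙ :=
      (integrable_const (1:ℝ)).indicator hmset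
    have heq : ∫ ω, Set.indicator {ω | b ≤ Z' ω} (fun _ => (1:ℝ)) ω ∂ℙ
        = (ℙ {ω | b ≤ Z' ω}).toReal := by
      rw [integral_indicator_const _ hmset]
      simp [measureReal_def]
    rw [← heq]
    refine integral_mono_ae hind (hint_of_bcf g₂ Z hZm) ?_
    filter_upwards [hZae] with ω h
    by_cases hω : ω ∈ {ω | b ≤ Z' ω}
    · rw [Set.indicator_of_mem hω]
      rw [hg₂_one (Z ω) (by rw [h]; exact hω)]
    · rw [Set.indicator_of_notMem hω]
      rw [hg₂x]
      exact (hclamp_mem _).1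
  have hq1pos : 0 < ∫ ω, g₁ (Z ω) ∂ℙ := lt_of_lt_of_le hp1pos hq1
  have hq2pos : 0 < ∫ ω, g₂ (Z ω) ∂ℙ := lt_of_lt_of_le hp2pos hq2
  -- mean of the estimator
  set m : ℕ → ℝ := fun M => ∫ ω, Chat M ω * S M ω / D M ω ∂ℙ with hmdef
  -- concentration: gg (m M) converges to ∫ gg (Z)
  have hconc : ∀ (gg : BoundedContinuousFunction ℝ ℝ) (L : ℝ), 0 < L →
      (∀ x, 0 ≤ gg x ∧ gg x ≤ 1) →
      (∀ x y, |gg x - gg y| ≤ L * |x - y|) →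
      Tendsto (fun M => gg (m M)) atTop (𝓝 (∫ ω, gg (Z ω) ∂ℙ)) := by
    intro gg L hL hmem hlip
    rw [Metric.tendsto_atTop]
    intro η hη
    obtain ⟨N₁, hN₁⟩ := Metric.tendsto_atTop.1 (hpart1 gg) (η/4) (by positivity)
    set t : ℝ := η/(4*L) with ht
    have htpos : 0 < t := by rw [ht]; positivity
    obtain ⟨N₂, hN₂⟩ := eventually_atTop.1 (htend.eventually
      (eventually_lt_nhds (show (0:ℝ) < η*t/(2*L) by positivity)))
    refine ⟨max (max N₁ N₂) 1, fun M hM => ?_⟩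
    have hM1 : 1 ≤ M := le_trans (le_max_right _ _) hM
    have hMN₁ : N₁ ≤ M := le_trans (le_trans (le_max_left _ _) (le_max_left _ _)) hM
    have hMN₂ : N₂ ≤ M := le_trans (le_trans (le_max_right _ _) (le_max_left _ _)) hM
    -- the estimator is a.s. bounded by B * M
    have hrb : ∀ᵐ ω ∂ℙ, ‖Chat M ω * S M ω / D M ω‖ ≤ B * M := by
      filter_upwards [hpos_all] with ω hω
      have hM0 : 0 < (M:ℝ) := by exact_mod_cast hM1
      have hsum : Chat M ω ≤ ∑ k ∈ Finset.Icc 1 M, Chat k ω :=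
        Finset.single_le_sum (f := fun i => Chat i ω) (fun i _ => (hω i).le)
          (Finset.mem_Icc.2 ⟨hM1, le_rfl⟩)
      have hsp : 0 < ∑ k ∈ Finset.Icc 1 M, Chat k ω := lt_of_lt_of_le (hω M) hsum
      have hDpos : 0 < D M ω := by
        simp only [hD]
        positivity
      rw [Real.norm_eq_abs, abs_div, abs_of_pos hDpos, abs_mul, abs_of_pos (hω M),
        div_le_iff₀ hDpos]
      have hDform : B * M * D M ω = B * (∑ k ∈ Finset.Icc 1 M, Chat k ω) := by
        simp only [hD]
        field_simp
      rw [hDform]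
      calc Chat M ω * |S M ω| ≤ Chat M ω * B :=
            mul_le_mul_of_nonneg_left (hS_bdd M ω) (hω M).le
        _ ≤ (∑ k ∈ Finset.Icc 1 M, Chat k ω) * B :=
            mul_le_mul_of_nonneg_right hsum hB0
        _ = B * (∑ k ∈ Finset.Icc 1 M, Chat k ω) := by ring
    have hmem2 : MemLp (fun ω => Chat M ω * S M ω / D M ω) 2 ℙ :=
      MemLp.of_bound (hrm M hM1).aestronglyMeasurable (B*M) hrb
    have hint : Integrable (fun ω => Chat M ω * S M ω / D M ω) ℙ :=
      hmem2.integrable one_le_two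
    have hvarM : variance (fun ω => Chat M ω * S M ω / D M ω) ℙ
        = ∫ ω, (Chat M ω * S M ω / D M ω - m M)^2 ∂ℙ := by
      rw [variance_eq_integral (hrm M hM1)]
    have hsq_int : Integrable (fun ω => (Chat M ω * S M ω / D M ω - m M)^2) ℙ :=
      (hmem2.sub (memLp_const (m M))).integrable_sq
    have hgg_int : Integrable (fun ω => gg (Chat M ω * S M ω / D M ω)) ℙ :=
      hint_of_bcf gg _ (hrm M hM1)
    -- pointwise concentration bound
    have hpt : ∀ ω, |gg (Chat M ω * S M ω / D M ω) - gg (m M)|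
        ≤ L*t/2 + (L/(2*t)) * (Chat M ω * S M ω / D M ω - m M)^2 := by
      intro ω
      refine le_trans (hlip _ _) ?_
      generalize (Chat M ω * S M ω / D M ω - m M) = w
      have h : 2*t*|w| ≤ t^2 + w^2 := by
        nlinarith [sq_nonneg (|w| - t), sq_abs w]
      have heq : L*t/2 + (L/(2*t))*w^2 = L*((t^2 + w^2)/(2*t)) := by
        field_simp
      rw [heq]
      refine mul_le_mul_of_nonneg_left ?_ hL.le
      rw [le_div_iff₀ (by positivity)]
      linarith
    have hconc_int : |(∫ ω, gg (Chat M ω * S M ω / D M ω) ∂ℙ) - gg (m M)|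
        ≤ L*t/2 + (L/(2*t)) * variance (fun ω => Chat M ω * S M ω / D M ω) ℙ := by
      have h1 : (∫ ω, gg (Chat M ω * S M ω / D M ω) ∂ℙ) - gg (m M)
          = ∫ ω, (gg (Chat M ω * S M ω / D M ω) - gg (m M)) ∂ℙ := by
        rw [integral_sub hgg_int (integrable_const _), integral_const]
        simp
      rw [h1, hvarM]
      have e5 : ∫ ω, (L*t/2 + (L/(2*t)) * (Chat M ω * S M ω / D M ω - m M)^2) ∂ℙ
          = L*t/2 + (L/(2*t)) * ∫ ω, (Chat M ω * S M ω / D M ω - m M)^2 ∂ℙ := by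
        have e6 : ∫ ω, (L*t/2 + (L/(2*t)) * (Chat M ω * S M ω / D M ω - m M)^2) ∂ℙ
            = (∫ _ω, (L*t/2 : ℝ) ∂ℙ)
              + ∫ ω, (L/(2*t)) * (Chat M ω * S M ω / D M ω - m M)^2 ∂ℙ :=
          integral_add (integrable_const _) (hsq_int.const_mul _)
        rw [e6, integral_const, integral_const_mul]
        simp
      calc |∫ ω, (gg (Chat M ω * S M ω / D M ω) - gg (m M)) ∂ℙ|
          ≤ ∫ ω, |gg (Chat M ω * S M ω / D M ω) - gg (m M)| ∂ℙ := by
            simpa [Real.norm_eq_abs] using norm_integral_le_integral_norm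
              (fun ω => gg (Chat M ω * S M ω / D M ω) - gg (m M))
        _ ≤ ∫ ω, (L*t/2 + (L/(2*t)) * (Chat M ω * S M ω / D M ω - m M)^2) ∂ℙ :=
            integral_mono_ae (hgg_int.sub (integrable_const _)).abs
              ((integrable_const _).add (hsq_int.const_mul _))
              (Eventually.of_forall hpt)
        _ = _ := e5
    -- assemble
    have hvlt := hN₂ M hMN₂
    have hdist1 := hN₁ M hMN₁
    rw [Real.dist_eq] at hdist1 ⊢
    have hvar_nonneg := variance_nonneg (fun ω => Chat M ω * S M ω / D M ω) ℙ
    have h7 : (L/(2*t)) * variance (fun ω => Chat M ω * S M ω / D M ω) ℙ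
        < (L/(2*t)) * (η*t/(2*L)) :=
      mul_lt_mul_of_pos_left hvlt (by positivity)
    have h8 : (L/(2*t)) * (η*t/(2*L)) = η/4 := by
      field_simp
      ring
    have h9 : L*t/2 = η/8 := by
      rw [ht]
      field_simp
      ring
    have htri : |gg (m M) - ∫ ω, gg (Z ω) ∂ℙ|
        ≤ |(∫ ω, gg (Chat M ω * S M ω / D M ω) ∂ℙ) - gg (m M)|
          + |(∫ ω, gg (Chat M ω * S M ω / D M ω) ∂ℙ) - ∫ ω, gg (Z ω) ∂ℙ| := by
      have h := abs_sub_le (gg (m M)) (∫ ω, gg (Chat M ω * S M ω / D M ω) ∂ℙ)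
        (∫ ω, gg (Z ω) ∂ℙ)
      rw [abs_sub_comm (gg (m M)) (∫ ω, gg (Chat M ω * S M ω / D M ω) ∂ℙ)] at h
      exact h
    calc |gg (m M) - ∫ ω, gg (Z ω) ∂ℙ| ≤ _ := htri
      _ < (L*t/2 + (L/(2*t)) * variance (fun ω => Chat M ω * S M ω / D M ω) ℙ) + η/4 := by
          linarith
      _ < η/8 + η/4 + η/4 := by
          rw [h9]
          linarith
      _ < η := by linarith
  -- conclude
  have hg₁t := hconc g₁ (1/(mid-a)) (by positivity)
    (fun x => by rw [hg₁x]; exact hclamp_mem _) hg₁_lip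
  have hg₂t := hconc g₂ (1/(b-mid)) (by positivity)
    (fun x => by rw [hg₂x]; exact hclamp_mem _) hg₂_lip
  have he₁ : ∀ᶠ M in atTop, 0 < g₁ (m M) := hg₁t.eventually (eventually_gt_nhds hq1pos)
  have he₂ : ∀ᶠ M in atTop, 0 < g₂ (m M) := hg₂t.eventually (eventually_gt_nhds hq2pos)
  obtain ⟨M, h1, h2⟩ := (he₁.and he₂).exists
  have hlt1 := hg₁_pos _ h1
  have hlt2 := hg₂_pos _ h2
  linarith
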